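/- In a 1-differential poset Γ, define the Plancherel transition probabilities p_{v,w} = d(∅,w) / ((n+1) d(∅,v)) for v ⋖ w with |v| = n. Then for vertices u ≤ v of ranks k ≤ n, the probability of reaching v from u along the Markov chain with these transition probabilities is p(u,v) = (k!/n!) · d(u,v) · d(∅,v) / d(∅,u); that is, the function p(u,v) := (k!/n!) d(u,v) d(∅,v)/d(∅,u) satisfies Σ_{v : |v| = n} p(u,v) · p_{v,w} = p(u,w) for all w of rank n+1, and p(u,u) = 1. -/

import Mathlib

/-- A branching diagram: a graded graph with finite levels, a unique minimal
vertex `bot` of rank `0`, no maximal vertices, and every vertex of positive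
rank covering some vertex. `covers u w` means `w` covers `u` (`u ⋖ w`). -/
structure BranchingDiagram where
  V : Type
  rank : V → ℕ
  covers : V → V → Prop
  rank_covers : ∀ u w, covers u w → rank w = rank u + 1
  finite_level : ∀ n : ℕ, {v : V | rank v = n}.Finite
  bot : V
  rank_bot : rank bot = 0
  bot_unique : ∀ v, rank v = 0 → v = bot
  no_max : ∀ v, ∃ w, covers v w
  exists_pred : ∀ v, rank v ≠ 0 → ∃ u, covers u v

/-- `Γ.d u w` is the number of saturated chains (paths along covering relations)
from `u` to `w`. -/
noncomputable def BranchingDiagram.d (Γ : BranchingDiagram) (u w : Γ.V) : ℕ :=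
  Set.ncard {p : List Γ.V | p.Chain' Γ.covers ∧ p.head? = some u ∧ p.getLast? = some w}

/-- A `1`-differential poset: (D1) for distinct vertices of equal rank, the number
of common lower covers equals the number of common upper covers; (D2) each vertex
is covered by one more vertex than it covers. -/
def BranchingDiagram.IsDifferential (Γ : BranchingDiagram) : Prop :=
  (∀ u v : Γ.V, u ≠ v → Γ.rank u = Γ.rank v →
      Set.ncard {x | Γ.covers x u ∧ Γ.covers x v} =
        Set.ncard {w | Γ.covers u w ∧ Γ.covers v w}) ∧
  (∀ v : Γ.V, Set.ncard {w | Γ.covers v w} = Set.ncard {u | Γ.covers u v} + 1)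

namespace BranchingDiagram

variable (Γ : BranchingDiagram)

def S (u w : Γ.V) : Set (List Γ.V) :=
  {p | p.Chain' Γ.covers ∧ p.head? = some u ∧ p.getLast? = some w}

lemma d_eq (u w : Γ.V) : Γ.d u w = (Γ.S u w).ncard := rfl

lemma chain_rank : ∀ (p : List Γ.V), p.Chain' Γ.covers → ∀ u w, p.head? = some u →
    p.getLast? = some w → Γ.rank w + 1 = Γ.rank u + p.length := by
  intro p
  induction p with
  | nil => intro _ u w h _; simp at h
  | cons a t ih =>
    intro hc u w hh hl
    cases t with
    | nil =>
      simp only [List.head?_cons, Option.some.injEq] at hh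
      simp only [List.getLast?_singleton, Option.some.injEq] at hl
      subst hh; subst hl; simp
    | cons b t' =>
      rw [List.Chain', List.isChain_cons_cons] at hc
      have h1 := ih hc.2 b w rfl (by simpa using hl)
      have hr := Γ.rank_covers a b hc.1
      simp only [List.head?_cons, Option.some.injEq] at hh
      subst hh
      simp only [List.length_cons] at h1 ⊢
      omega

lemma append_mem {u v w : Γ.V} {q : List Γ.V} (hq : q ∈ Γ.S u v) (hvw : Γ.covers v w) :
    q ++ [w] ∈ Γ.S u w := by
  obtain ⟨hc, hh, hl⟩ := hq
  have hq0 : q ≠ [] := by rintro rfl; simp at hh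
  refine ⟨?_, ?_, ?_⟩
  · refine List.IsChain.append hc (List.isChain_singleton w) ?_
    intro x hx y hy
    simp only [List.head?_cons, Option.mem_def, Option.some.injEq] at hy
    rw [Option.mem_def, hl] at hx
    cases hx; cases hy
    exact hvw
  · rw [List.head?_append_of_ne_nil _ hq0]; exact hh
  · simp

lemma decomp (u w : Γ.V) (h : Γ.rank u < Γ.rank w) :
    Γ.S u w = ⋃ v ∈ {v | Γ.covers v w}, (· ++ [w]) '' Γ.S u v := by
  ext p
  simp only [Set.mem_iUnion, Set.mem_image, Set.mem_setOf_eq, exists_prop]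
  constructor
  · rintro ⟨hc, hh, hl⟩
    have hlen := Γ.chain_rank p hc u w hh hl
    have h2 : 2 ≤ p.length := by omega
    set q := p.dropLast with hqdef
    have hql : q.length = p.length - 1 := List.length_dropLast
    have hq0 : q ≠ [] := by
      intro h0; rw [h0] at hql; simp at hql; omega
    have hpq : q ++ [w] = p := List.dropLast_append_getLast? w hl
    have hcq : (q ++ [w]).Chain' Γ.covers := by rw [hpq]; exact hc
    rw [List.Chain', List.isChain_append] at hcq
    have hqlast : q.getLast? = some (q.getLast hq0) :=
      List.getLast?_eq_getLast_of_ne_nil hq0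
    refine ⟨q.getLast hq0, ?_, q, ⟨hcq.1, ?_, hqlast⟩, hpq⟩
    · exact hcq.2.2 _ hqlast w rfl
    · rw [← hpq] at hh
      rwa [List.head?_append_of_ne_nil _ hq0] at hh
  · rintro ⟨v, hv, q, hq, rfl⟩
    exact Γ.append_mem hq hv

lemma covers_finite (w : Γ.V) : {v | Γ.covers v w}.Finite :=
  (Γ.finite_level (Γ.rank w - 1)).subset fun v hv => by
    have := Γ.rank_covers v w hv
    simp only [Set.mem_setOf_eq]
    omega

lemma S_finite (u : Γ.V) : ∀ (n : ℕ) (w : Γ.V), Γ.rank w = n → (Γ.S u w).Finite := by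
  intro n
  induction n using Nat.strong_induction_on with
  | _ n ih =>
    intro w hw
    rcases lt_or_ge (Γ.rank u) (Γ.rank w) with h | h
    · rw [Γ.decomp u w h]
      refine (Γ.covers_finite w).biUnion fun v hv => Set.Finite.image _ ?_
      have hrv := Γ.rank_covers v w hv
      exact ih (Γ.rank v) (by omega) v rfl
    · refine (Set.finite_singleton [u]).subset ?_
      rintro p ⟨hc, hh, hl⟩
      have hlen := Γ.chain_rank p hc _ _ hh hl
      have hne : p ≠ [] := by rintro rfl; simp at hh
      have hne' : p.length ≠ 0 := by simpa [List.length_eq_zero_iff] using hne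
      have h1 : p.length = 1 := by omega
      obtain ⟨a, rfl⟩ := List.length_eq_one_iff.mp h1
      simp only [List.head?_cons, Option.some.injEq] at hh
      subst hh
      rfl

lemma d_succ (u w : Γ.V) (h : Γ.rank u < Γ.rank w) :
    Γ.d u w = ∑ v ∈ (Γ.covers_finite w).toFinset, Γ.d u v := by
  classical
  have key : Γ.S u w = ↑((Γ.covers_finite w).toFinset.biUnion
      fun v => ((Γ.S_finite u (Γ.rank v) v rfl).toFinset.image (· ++ [w]))) := by
    rw [Γ.decomp u w h]
    ext p
    simp [Set.Finite.mem_toFinset]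
  rw [d_eq, key, Set.ncard_coe_finset, Finset.card_biUnion]
  · refine Finset.sum_congr rfl fun v hv => ?_
    rw [Finset.card_image_of_injective _ (List.append_left_injective [w]),
      d_eq, Set.ncard_eq_toFinset_card _ (Γ.S_finite u (Γ.rank v) v rfl)]
  · intro v₁ h₁ v₂ h₂ hne
    rw [Function.onFun, Finset.disjoint_left]
    rintro p hp₁ hp₂
    simp only [Finset.mem_image, Set.Finite.mem_toFinset] at hp₁ hp₂
    obtain ⟨q₁, hq₁, rfl⟩ := hp₁
    obtain ⟨q₂, hq₂, heq⟩ := hp₂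
    have hq : q₂ = q₁ := List.append_left_injective [w] heq
    subst hq
    exact hne (by rw [← Option.some_inj, ← hq₁.2.2, ← hq₂.2.2])

lemma S_bot_nonempty : ∀ (n : ℕ) (v : Γ.V), Γ.rank v = n → (Γ.S Γ.bot v).Nonempty := by
  intro n
  induction n with
  | zero =>
    intro v hv
    have := Γ.bot_unique v hv
    subst this
    exact ⟨[Γ.bot], List.isChain_singleton _, rfl, rfl⟩
  | succ n ih =>
    intro v hv
    obtain ⟨x, hx⟩ := Γ.exists_pred v (by omega)
    have hrx := Γ.rank_covers x v hx
    obtain ⟨q, hq⟩ := ih x (by omega)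
    exact ⟨q ++ [v], Γ.append_mem hq hx⟩

lemma d_bot_pos (v : Γ.V) : 0 < Γ.d Γ.bot v := by
  rw [d_eq]
  exact (Set.ncard_pos (Γ.S_finite _ _ v rfl)).mpr (Γ.S_bot_nonempty _ v rfl)

lemma d_self (u : Γ.V) : Γ.d u u = 1 := by
  rw [d_eq]
  have hS : Γ.S u u = {[u]} := by
    ext p
    constructor
    · rintro ⟨hc, hh, hl⟩
      have hlen := Γ.chain_rank p hc _ _ hh hl
      have hne : p ≠ [] := by rintro rfl; simp at hh
      have hne' : p.length ≠ 0 := by simpa [List.length_eq_zero_iff] using hne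
      have h1 : p.length = 1 := by omega
      obtain ⟨a, rfl⟩ := List.length_eq_one_iff.mp h1
      simp only [List.head?_cons, Option.some.injEq] at hh
      subst hh
      rfl
    · rintro rfl
      exact ⟨List.isChain_singleton _, rfl, rfl⟩
  rw [hS, Set.ncard_singleton]

end BranchingDiagram

/-- Plancherel transition probabilities on a `1`-differential poset: the function
`p(u,v) = (k!/n!)·d(u,v)·d(∅,v)/d(∅,u)` satisfies `p(u,u) = 1` and
`Σ_{|v|=n} p(u,v)·p_{v,w} = p(u,w)` for `w` of rank `n+1`, where
`p_{v,w} = d(∅,w)/((n+1)·d(∅,v))` for `v ⋖ w` (and `0` otherwise, so the sum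
runs over `v ⋖ w`). -/
theorem stmt_10 (Γ : BranchingDiagram) (hΓ : Γ.IsDifferential) (u : Γ.V) (k : ℕ)
    (hu : Γ.rank u = k) :
    ((k.factorial : ℝ) / k.factorial * Γ.d u u * Γ.d Γ.bot u / Γ.d Γ.bot u = 1) ∧
    (∀ n : ℕ, k ≤ n → ∀ w : Γ.V, Γ.rank w = n + 1 →
      ∑ᶠ v ∈ {v | Γ.covers v w},
        ((k.factorial : ℝ) / n.factorial * Γ.d u v * Γ.d Γ.bot v / Γ.d Γ.bot u) *
          ((Γ.d Γ.bot w : ℝ) / ((n + 1) * Γ.d Γ.bot v)) =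
      (k.factorial : ℝ) / (n + 1).factorial * Γ.d u w * Γ.d Γ.bot w / Γ.d Γ.bot u) := by
  have hdu : (Γ.d Γ.bot u : ℝ) ≠ 0 := by
    exact_mod_cast (Γ.d_bot_pos u).ne'
  constructor
  · rw [Γ.d_self u]
    have hk : (k.factorial : ℝ) ≠ 0 := Nat.cast_ne_zero.mpr k.factorial_ne_zero
    field_simp
    exact Nat.cast_one
  · intro n hkn w hw
    have hC := Γ.covers_finite w
    have hd : Γ.d u w = ∑ v ∈ hC.toFinset, Γ.d u v := Γ.d_succ u w (by omega)
    rw [← Set.Finite.coe_toFinset hC, finsum_mem_coe_finset]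
    have hsum : ∑ v ∈ hC.toFinset,
        ((k.factorial : ℝ) / n.factorial * Γ.d u v * Γ.d Γ.bot v / Γ.d Γ.bot u) *
          ((Γ.d Γ.bot w : ℝ) / ((n + 1) * Γ.d Γ.bot v))
        = ∑ v ∈ hC.toFinset, (Γ.d u v : ℝ) *
            ((k.factorial : ℝ) / (n + 1).factorial * Γ.d Γ.bot w / Γ.d Γ.bot u) := by
      refine Finset.sum_congr rfl fun v hv => ?_
      have hdv : (Γ.d Γ.bot v : ℝ) ≠ 0 := by exact_mod_cast (Γ.d_bot_pos v).ne'
      have hn : (n.factorial : ℝ) ≠ 0 := Nat.cast_ne_zero.mpr n.factorial_ne_zero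
      have hn1 : ((n : ℝ) + 1) ≠ 0 := by positivity
      rw [Nat.factorial_succ]
      push_cast
      field_simp
    rw [hsum, ← Finset.sum_mul, hd]
    push_cast
    ring
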